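/- Equip E := ℂ^ℕ with the product σ-algebra of countably many copies of the Borel σ-algebra of ℂ. The essential spectrum multifunction Sp_ess : E → ℂ defined by Sp_ess(x) := ⋂_{n≥1} closure({xₙ, xₙ₊₁, …}) is open-measurable: for every open U ⊆ ℂ, the set {x ∈ E | Sp_ess(x) ∩ U ≠ ∅} is measurable. -/

import Mathlib

open Metric Set

/-- The essential spectrum multifunction `Sp_ess x = ⋂ n, closure {xₙ, xₙ₊₁, …}` on
`ℂ^ℕ` with the product sigma-algebra is open-measurable. -/
theorem stmt_15 :
    ∀ U : Set ℂ, IsOpen U →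
      MeasurableSet
        {x : ℕ → ℂ | ((⋂ n : ℕ, closure (x '' Set.Ici n)) ∩ U).Nonempty} := by
  intro U hU
  classical
  obtain ⟨D, hDc, hDd⟩ := TopologicalSpace.exists_countable_dense ℂ
  set s : Set (ℂ × ℚ) :=
    {p : ℂ × ℚ | p.1 ∈ D ∧ 0 < (p.2 : ℝ) ∧ closedBall p.1 (p.2 : ℝ) ⊆ U} with hs
  have hsc : s.Countable := by
    have : s ⊆ D ×ˢ (Set.univ : Set ℚ) := fun p hp => ⟨hp.1, trivial⟩
    exact (hDc.prod (Set.to_countable _)).mono this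
  have key : {x : ℕ → ℂ | ((⋂ n : ℕ, closure (x '' Set.Ici n)) ∩ U).Nonempty}
      = ⋃ p ∈ s, ⋂ N : ℕ, ⋃ n ∈ Set.Ici N,
          {x : ℕ → ℂ | x n ∈ ball p.1 (p.2 : ℝ)} := by
    ext x
    simp only [mem_setOf_eq, mem_iUnion, mem_iInter, exists_prop]
    constructor
    · rintro ⟨z, hz, hzU⟩
      simp only [mem_iInter] at hz
      obtain ⟨ε, hε, hball⟩ := Metric.isOpen_iff.1 hU z hzU
      obtain ⟨r, hr0, hrε⟩ := exists_rat_btwn (by positivity : (0 : ℝ) < ε / 3)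
      obtain ⟨q, hqD, hq⟩ := hDd.exists_mem_open isOpen_ball
        (⟨z, mem_ball_self hr0⟩ : (ball z (r : ℝ)).Nonempty)
      rw [mem_ball] at hq
      refine ⟨⟨q, r⟩, ⟨hqD, hr0, ?_⟩, ?_⟩
      · intro w hw
        apply hball
        rw [mem_ball]
        calc dist w z ≤ dist w q + dist q z := dist_triangle _ _ _
          _ < r + r := add_lt_add_of_le_of_lt (mem_closedBall.1 hw) hq
          _ ≤ ε / 3 + ε / 3 := by linarith [hrε.le]
          _ < ε := by linarith
      · intro N
        have hnhds : ball (q : ℂ) (r : ℝ) ∈ nhds z :=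
          isOpen_ball.mem_nhds (by rw [mem_ball, dist_comm]; exact hq)
        obtain ⟨y, hy1, hy2⟩ := mem_closure_iff_nhds.1 (hz N) _ hnhds
        obtain ⟨n, hn, rfl⟩ := hy2
        exact ⟨n, hn, hy1⟩
    · rintro ⟨⟨q, r⟩, ⟨hqD, hr, hsub⟩, hio⟩
      set t : ℕ → Set ℂ := fun n => closure (x '' Set.Ici n) ∩ closedBall q (r : ℝ)
        with ht
      have htne : ∀ n, (t n).Nonempty := by
        intro n
        obtain ⟨m, hm, hxm⟩ := hio n
        exact ⟨x m, subset_closure ⟨m, hm, rfl⟩, ball_subset_closedBall hxm⟩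
      have htmono : ∀ n, t (n + 1) ⊆ t n := by
        intro n
        exact inter_subset_inter_left _
          (closure_mono (image_mono (Ici_subset_Ici.2 (Nat.le_succ n))))
      have htclosed : ∀ n, IsClosed (t n) :=
        fun n => isClosed_closure.inter isClosed_closedBall
      have htcompact : IsCompact (t 0) :=
        (isCompact_closedBall _ _).inter_left isClosed_closure
      obtain ⟨z, hz⟩ := IsCompact.nonempty_iInter_of_sequence_nonempty_isCompact_isClosed
        t htmono htne htcompact htclosed
      simp only [mem_iInter, ht, mem_inter_iff] at hz
      refine ⟨z, mem_inter (mem_iInter.2 fun n => (hz n).1) (hsub (hz 0).2)⟩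
  rw [key]
  refine MeasurableSet.biUnion hsc fun p _ => MeasurableSet.iInter fun N =>
    MeasurableSet.biUnion (Set.to_countable _) fun n _ => ?_
  exact measurable_pi_apply n isOpen_ball.measurableSet
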